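/- Let X be a random variable on a probability space (Ω, 𝒢, P) with finite second moment, let A ∈ 𝒢 be any event, and let ℱ ⊆ 𝒢 be a sub-σ-algebra. Then, almost surely, Var(X | ℱ) ≥ Var( X·1_A + (E(X·1_A | ℱ)/P(A | ℱ))·1_{A^c} | ℱ ), where the convention 0/0 = 0 is used in the ratio E(X·1_A | ℱ)/P(A | ℱ). -/

import Mathlib

open MeasureTheory


lemma int_mul2 {Ω : Type*} {𝒢 : MeasurableSpace Ω} {P : Measure Ω}
    {Z W : Ω → ℝ} (hZ : MemLp Z 2 P) (hW : MemLp W 2 P) :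
    Integrable (fun ω => Z ω * W ω) P := by
  have h1 : Integrable (fun ω => Z ω ^ 2) P := (memLp_two_iff_integrable_sq hZ.1).mp hZ
  have h2 : Integrable (fun ω => W ω ^ 2) P := (memLp_two_iff_integrable_sq hW.1).mp hW
  refine ((h1.add h2).const_mul (1/2)).mono' (hZ.1.mul hW.1) ?_
  filter_upwards with ω
  have : ‖Z ω * W ω‖ = |Z ω| * |W ω| := by rw [norm_mul]; rfl
  rw [this]
  simp only [Pi.add_apply]
  nlinarith [sq_nonneg (|Z ω| - |W ω|), sq_abs (Z ω), sq_abs (W ω), abs_nonneg (Z ω), abs_nonneg (W ω)]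

lemma condCS {Ω : Type*} {𝒢 : MeasurableSpace Ω} (P : Measure Ω) [IsProbabilityMeasure P]
    {ℱ : MeasurableSpace Ω} (hℱ : ℱ ≤ 𝒢) {Z W : Ω → ℝ}
    (hZ : MemLp Z 2 P) (hW : MemLp W 2 P) :
    ∀ᵐ ω ∂P, ((P[fun ω' => Z ω' * W ω' | ℱ]) ω) ^ 2 ≤
      (P[fun ω' => Z ω' ^ 2 | ℱ]) ω * (P[fun ω' => W ω' ^ 2 | ℱ]) ω := by
  have hZ2 : Integrable (fun ω => Z ω ^ 2) P := (memLp_two_iff_integrable_sq hZ.1).mp hZ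
  have hW2 : Integrable (fun ω => W ω ^ 2) P := (memLp_two_iff_integrable_sq hW.1).mp hW
  have hZW : Integrable (fun ω => Z ω * W ω) P := int_mul2 hZ hW
  have key : ∀ t : ℚ, ∀ᵐ ω ∂P,
      0 ≤ (P[fun ω' => Z ω' ^ 2 | ℱ]) ω - 2 * (t:ℝ) * (P[fun ω' => Z ω' * W ω' | ℱ]) ω
          + (t:ℝ) ^ 2 * (P[fun ω' => W ω' ^ 2 | ℱ]) ω := by
    intro t
    have ee : (fun ω => (Z ω - (t:ℝ) * W ω) ^ 2)
        = (fun ω' => Z ω' ^ 2) - (2 * (t:ℝ)) • (fun ω' => Z ω' * W ω')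
          + ((t:ℝ) ^ 2) • fun ω' => W ω' ^ 2 := by
      funext ω
      simp only [Pi.add_apply, Pi.sub_apply, Pi.smul_apply, smul_eq_mul]
      ring
    have hnn : 0 ≤ᵐ[P] P[fun ω => (Z ω - (t:ℝ) * W ω) ^ 2 | ℱ] :=
      condExp_nonneg (Filter.Eventually.of_forall fun ω => sq_nonneg _)
    have hexp : P[fun ω => (Z ω - (t:ℝ) * W ω) ^ 2 | ℱ]
        =ᵐ[P] (P[fun ω' => Z ω' ^ 2 | ℱ]) - (2 * (t:ℝ)) • (P[fun ω' => Z ω' * W ω' | ℱ])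
          + ((t:ℝ) ^ 2) • (P[fun ω' => W ω' ^ 2 | ℱ]) := by
      rw [ee]
      refine (condExp_add (hZ2.sub (hZW.smul (2 * (t:ℝ)))) ((hW2.smul ((t:ℝ) ^ 2))) _).trans ?_
      refine Filter.EventuallyEq.add ?_ (condExp_smul _ _ _)
      refine (condExp_sub hZ2 (hZW.smul _) _).trans ?_
      exact Filter.EventuallyEq.sub Filter.EventuallyEq.rfl (condExp_smul _ _ _)
    filter_upwards [hnn, hexp] with ω h1 h2
    rw [h2] at h1
    simp only [Pi.add_apply, Pi.sub_apply, Pi.smul_apply, smul_eq_mul, Pi.zero_apply] at h1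
    linarith
  rw [← ae_all_iff] at key
  filter_upwards [key] with ω h
  set a := (P[fun ω' => Z ω' ^ 2 | ℱ]) ω
  set b := (P[fun ω' => Z ω' * W ω' | ℱ]) ω
  set cc := (P[fun ω' => W ω' ^ 2 | ℱ]) ω
  have hall : ∀ t : ℝ, 0 ≤ cc * (t * t) + (-2 * b) * t + a := by
    have hsub : Set.range ((↑) : ℚ → ℝ) ⊆ {t : ℝ | 0 ≤ cc * (t * t) + (-2 * b) * t + a} := by
      rintro _ ⟨q, rfl⟩
      have := h q
      simp only [Set.mem_setOf_eq]
      nlinarith [this]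
    have hcl : IsClosed {t : ℝ | 0 ≤ cc * (t * t) + (-2 * b) * t + a} :=
      isClosed_le continuous_const (by continuity)
    intro t
    exact closure_minimal hsub hcl (Rat.denseRange_cast t)
  have hd := discrim_le_zero hall
  simp only [discrim] at hd
  nlinarith [hd]

lemma vanish {Ω : Type*} [𝒢 : MeasurableSpace Ω] (P : Measure Ω) [IsProbabilityMeasure P]
    {S : Set Ω} (hS : MeasurableSet S) {f : Ω → ℝ} (hf : Integrable f P)
    (ℱ : MeasurableSpace Ω) (hℱ : ℱ ≤ 𝒢) :
    ∀ᵐ ω ∂P, (P[S.indicator (fun _ => (1:ℝ)) | ℱ]) ω = 0 → (P[S.indicator f | ℱ]) ω = 0 := by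
  letI : MeasurableSpace Ω := 𝒢
  set p := P[S.indicator (fun _ => (1:ℝ)) | ℱ] with hp
  have hpm : StronglyMeasurable[ℱ] p := stronglyMeasurable_condExp
  set B := p ⁻¹' {0} with hBdef
  have hB : MeasurableSet[ℱ] B := hpm.measurable (measurableSet_singleton 0)
  have hB' : MeasurableSet[𝒢] B := hℱ _ hB
  have hind : Integrable (S.indicator (fun _ => (1:ℝ))) P := (integrable_const 1).indicator hS
  have h0 : ∫ ω in B, S.indicator (fun _ => (1:ℝ)) ω ∂P = 0 := by
    rw [← setIntegral_condExp hℱ hind hB]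
    calc ∫ ω in B, p ω ∂P = ∫ _ω in B, (0:ℝ) ∂P := by
          refine setIntegral_congr_fun hB' fun x hx => ?_
          simpa [hBdef] using hx
      _ = 0 := by simp
  have hSB : P (B ∩ S) = 0 := by
    rw [setIntegral_indicator hS, setIntegral_const, smul_eq_mul, mul_one] at h0
    have := measure_ne_top P (B ∩ S)
    exact ((ENNReal.toReal_eq_zero_iff _).mp h0).resolve_right this
  have hz : (B.indicator (fun _ => (1:ℝ)) * S.indicator f) =ᵐ[P] 0 := by
    have hnm : ∀ᵐ ω ∂P, ω ∉ B ∩ S := measure_eq_zero_iff_ae_notMem.mp hSB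
    filter_upwards [hnm] with ω hω
    simp only [Pi.mul_apply, Pi.zero_apply]
    by_cases h1 : ω ∈ B
    · have h2 : ω ∉ S := fun h2 => hω ⟨h1, h2⟩
      simp [Set.indicator_of_notMem h2]
    · simp [Set.indicator_of_notMem h1]
  have hint_fg : Integrable (B.indicator (fun _ => (1:ℝ)) * S.indicator f) P :=
    (integrable_zero _ _ _).congr hz.symm
  have hpull := condExp_mul_of_stronglyMeasurable_left (m := ℱ) (μ := P)
    (stronglyMeasurable_const.indicator hB) hint_fg (hf.indicator hS)
  have hleft : P[B.indicator (fun _ => (1:ℝ)) * S.indicator f | ℱ] =ᵐ[P] 0 := by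
    refine (condExp_congr_ae hz).trans ?_
    rw [condExp_zero]
  have hcomb : (B.indicator (fun _ => (1:ℝ)) * P[S.indicator f | ℱ]) =ᵐ[P] 0 :=
    hpull.symm.trans hleft
  filter_upwards [hcomb] with ω hω hp0
  have hωB : ω ∈ B := by simpa [hBdef] using hp0
  simpa [Pi.mul_apply, Set.indicator_of_mem hωB] using hω

lemma alg (s s' m m' p q cv : ℝ) (hcs2 : m' ^ 2 ≤ s' * q)
    (hsp : p + q = 1) (hp0 : 0 ≤ p) (hq0 : 0 ≤ q) (hs'0 : 0 ≤ s') (hcv : cv = m / p)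
    (hv1 : p = 0 → m = 0) (hv2 : p = 0 → s = 0) :
    s + cv ^ 2 * q - (m + cv * q) ^ 2 ≤ (s + s') - (m + m') ^ 2 := by
  rcases eq_or_lt_of_le hp0 with hp | hp
  · have hm0 : m = 0 := hv1 hp.symm
    have hs0 : s = 0 := hv2 hp.symm
    have hc0 : cv = 0 := by rw [hcv, hm0, zero_div]
    have hq1 : q = 1 := by linarith
    rw [hm0, hs0, hc0, hq1] at *
    nlinarith [hcs2]
  · have hcp : cv * p = m := by rw [hcv]; field_simp
    have hpq : p = 1 - q := by linarith
    rcases eq_or_lt_of_le hq0 with hq | hq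
    · have hm'0 : m' = 0 := by nlinarith [hcs2, sq_nonneg m']
      rw [← hcp, hm'0, ← hq]
      nlinarith [hs'0]
    · rw [← hcp, hpq]
      rw [hpq] at hp
      nlinarith [hcs2, mul_nonneg (by linarith : (0:ℝ) ≤ 1 - q) (sq_nonneg (cv * q - m')), hq, hs'0]

/-- The conditional variance `Var(X | m) = E(X² | m) - (E(X | m))²`. -/
noncomputable def condVar {Ω : Type*} {m0 : MeasurableSpace Ω} (m : MeasurableSpace Ω)
    (X : Ω → ℝ) (P : @Measure Ω m0) : Ω → ℝ :=
  fun ω => (P[fun ω' => X ω' ^ 2 | m]) ω - ((P[X | m]) ω) ^ 2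

/-- For any event `A` and sub-σ-algebra `ℱ`, almost surely
`Var(X | ℱ) ≥ Var(X·1_A + (E(X·1_A|ℱ)/P(A|ℱ))·1_{Aᶜ} | ℱ)`, with the convention `0/0 = 0`
(Lean's division by zero yields `0`). -/
theorem stmt8 {Ω : Type*} [𝒢 : MeasurableSpace Ω] (P : Measure Ω) [IsProbabilityMeasure P]
    (X : Ω → ℝ) (hX : MemLp X 2 P) (A : Set Ω) (hA : MeasurableSet A)
    (ℱ : MeasurableSpace Ω) (hℱ : ℱ ≤ 𝒢) :
    ∀ᵐ ω ∂P,
      condVar ℱ (fun ω' =>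
          A.indicator X ω'
            + (P[A.indicator X | ℱ]) ω' / (P[A.indicator (fun _ => (1 : ℝ)) | ℱ]) ω'
              * Aᶜ.indicator (fun _ => (1 : ℝ)) ω') P ω
        ≤ condVar ℱ X P ω := by
  letI : MeasurableSpace Ω := 𝒢
  -- notation
  set m : Ω → ℝ := P[A.indicator X | ℱ] with hm_def
  set p : Ω → ℝ := P[A.indicator (fun _ => (1 : ℝ)) | ℱ] with hp_def
  set q : Ω → ℝ := P[Aᶜ.indicator (fun _ => (1 : ℝ)) | ℱ] with hq_def
  set m' : Ω → ℝ := P[Aᶜ.indicator X | ℱ] with hm'_def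
  set s : Ω → ℝ := P[fun ω' => (A.indicator X ω') ^ 2 | ℱ] with hs_def
  set s' : Ω → ℝ := P[fun ω' => (Aᶜ.indicator X ω') ^ 2 | ℱ] with hs'_def
  set Y : Ω → ℝ := fun ω' =>
      A.indicator X ω' + m ω' / p ω' * Aᶜ.indicator (fun _ => (1 : ℝ)) ω' with hY_def
  set c : Ω → ℝ := fun ω' => m ω' / p ω' with hc_def
  -- basic MemLp / integrability facts
  have hXA : MemLp (A.indicator X) 2 P := hX.indicator hA
  have hXAc : MemLp (Aᶜ.indicator X) 2 P := hX.indicator hA.compl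
  have h1A : MemLp (A.indicator (fun _ => (1 : ℝ))) 2 P := (memLp_const 1).indicator hA
  have h1Ac : MemLp (Aᶜ.indicator (fun _ => (1 : ℝ))) 2 P := (memLp_const 1).indicator hA.compl
  have h1 : MemLp (fun _ : Ω => (1 : ℝ)) 2 P := memLp_const 1
  have intX : Integrable X P := hX.integrable one_le_two
  have intX2 : Integrable (fun ω => X ω ^ 2) P := (memLp_two_iff_integrable_sq hX.1).mp hX
  have intXA : Integrable (A.indicator X) P := hXA.integrable one_le_two
  have intXAc : Integrable (Aᶜ.indicator X) P := hXAc.integrable one_le_two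
  have intXA2 : Integrable (fun ω => (A.indicator X ω) ^ 2) P :=
    (memLp_two_iff_integrable_sq hXA.1).mp hXA
  have intXAc2 : Integrable (fun ω => (Aᶜ.indicator X ω) ^ 2) P :=
    (memLp_two_iff_integrable_sq hXAc.1).mp hXAc
  have int1A : Integrable (A.indicator (fun _ => (1 : ℝ))) P := (integrable_const 1).indicator hA
  have int1Ac : Integrable (Aᶜ.indicator (fun _ => (1 : ℝ))) P :=
    (integrable_const 1).indicator hA.compl
  -- Cauchy-Schwarz instances
  have eXA : (fun ω => A.indicator X ω * A.indicator (fun _ => (1 : ℝ)) ω) = A.indicator X := by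
    funext ω; by_cases h : ω ∈ A <;>
      simp [Set.indicator_of_mem, Set.indicator_of_notMem, h]
  have e1A : (fun ω => (A.indicator (fun _ => (1 : ℝ)) ω) ^ 2)
      = A.indicator (fun _ => (1 : ℝ)) := by
    funext ω; by_cases h : ω ∈ A <;>
      simp [Set.indicator_of_mem, Set.indicator_of_notMem, h]
  have eXAc : (fun ω => Aᶜ.indicator X ω * Aᶜ.indicator (fun _ => (1 : ℝ)) ω)
      = Aᶜ.indicator X := by
    funext ω; by_cases h : ω ∈ Aᶜ <;>
      simp [Set.indicator_of_mem, Set.indicator_of_notMem, h]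
  have e1Ac : (fun ω => (Aᶜ.indicator (fun _ => (1 : ℝ)) ω) ^ 2)
      = Aᶜ.indicator (fun _ => (1 : ℝ)) := by
    funext ω; by_cases h : ω ∈ Aᶜ <;>
      simp [Set.indicator_of_mem, Set.indicator_of_notMem, h]
  have CS1 : ∀ᵐ ω ∂P, (m ω) ^ 2 ≤ s ω * p ω := by
    have := condCS P hℱ hXA h1A
    rw [eXA, e1A] at this
    exact this
  have CS2 : ∀ᵐ ω ∂P, (m' ω) ^ 2 ≤ s' ω * q ω := by
    have := condCS P hℱ hXAc h1Ac
    rw [eXAc, e1Ac] at this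
    exact this
  have CS3 : ∀ᵐ ω ∂P, ((P[X | ℱ]) ω) ^ 2 ≤ (P[fun ω' => X ω' ^ 2 | ℱ]) ω := by
    have h := condCS P hℱ hX h1
    have e1 : (fun ω => X ω * (1 : ℝ)) = X := by funext ω; rw [mul_one]
    have e2 : (fun _ : Ω => (1 : ℝ) ^ 2) = fun _ : Ω => (1 : ℝ) := by funext ω; rw [one_pow]
    rw [e1, e2] at h
    have hcst : P[fun _ : Ω => (1 : ℝ) | ℱ] = fun _ => (1 : ℝ) := condExp_const hℱ (1 : ℝ)
    rw [hcst] at h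
    filter_upwards [h] with ω h1
    simpa using h1
  -- sum relations
  have hsum_p : ∀ᵐ ω ∂P, p ω + q ω = 1 := by
    have e : (fun _ : Ω => (1 : ℝ))
        = A.indicator (fun _ => (1 : ℝ)) + Aᶜ.indicator (fun _ => (1 : ℝ)) := by
      funext ω; by_cases h : ω ∈ A <;>
        simp [Set.indicator_of_mem, Set.indicator_of_notMem, h]
    have h1' : P[fun _ : Ω => (1 : ℝ) | ℱ] = fun _ => (1 : ℝ) := condExp_const hℱ (1 : ℝ)
    have h2' : P[fun _ : Ω => (1 : ℝ) | ℱ] =ᵐ[P] p + q := by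
      rw [e]; exact condExp_add int1A int1Ac _
    rw [h1'] at h2'
    filter_upwards [h2'] with ω e2
    exact e2.symm
  have hsum_m : ∀ᵐ ω ∂P, m ω + m' ω = (P[X | ℱ]) ω := by
    have e : X = A.indicator X + Aᶜ.indicator X := by
      funext ω; by_cases h : ω ∈ A <;>
        simp [Set.indicator_of_mem, Set.indicator_of_notMem, h]
    have h2' : P[X | ℱ] =ᵐ[P] m + m' := by
      nth_rewrite 1 [e]; exact condExp_add intXA intXAc _
    filter_upwards [h2'] with ω e2
    exact e2.symm
  have hsum_s : ∀ᵐ ω ∂P, s ω + s' ω = (P[fun ω' => X ω' ^ 2 | ℱ]) ω := by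
    have e : (fun ω' => X ω' ^ 2)
        = (fun ω' => (A.indicator X ω') ^ 2) + fun ω' => (Aᶜ.indicator X ω') ^ 2 := by
      funext ω; by_cases h : ω ∈ A <;>
        simp [Set.indicator_of_mem, Set.indicator_of_notMem, h]
    have h2' : P[fun ω' => X ω' ^ 2 | ℱ] =ᵐ[P] s + s' := by
      rw [e]; exact condExp_add intXA2 intXAc2 _
    filter_upwards [h2'] with ω e2
    exact e2.symm
  -- nonnegativity
  have hp0 : ∀ᵐ ω ∂P, 0 ≤ p ω :=
    condExp_nonneg (Filter.Eventually.of_forall fun ω => Set.indicator_nonneg (fun _ _ => zero_le_one) ω)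
  have hq0 : ∀ᵐ ω ∂P, 0 ≤ q ω :=
    condExp_nonneg (Filter.Eventually.of_forall fun ω => Set.indicator_nonneg (fun _ _ => zero_le_one) ω)
  have hs'0 : ∀ᵐ ω ∂P, 0 ≤ s' ω :=
    condExp_nonneg (Filter.Eventually.of_forall fun ω => sq_nonneg _)
  -- vanishing on {p = 0}
  have hv1 : ∀ᵐ ω ∂P, p ω = 0 → m ω = 0 := vanish P hA intX ℱ hℱ
  have hv2 : ∀ᵐ ω ∂P, p ω = 0 → s ω = 0 := by
    have := vanish P hA intX2 ℱ hℱ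
    have e : A.indicator (fun ω => X ω ^ 2) = fun ω => (A.indicator X ω) ^ 2 := by
      funext ω; by_cases h : ω ∈ A <;>
        simp [Set.indicator_of_mem, Set.indicator_of_notMem, h]
    rw [e] at this
    exact this
  -- main case split on integrability of Y^2
  by_cases hY2 : Integrable (fun ω => Y ω ^ 2) P
  · -- Y ∈ L²
    have hmF : StronglyMeasurable[ℱ] m := hm_def ▸ stronglyMeasurable_condExp
    have hpF : StronglyMeasurable[ℱ] p := hp_def ▸ stronglyMeasurable_condExp
    have hcF : StronglyMeasurable[ℱ] c := (hmF.measurable.div hpF.measurable).stronglyMeasurable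
    have hc2F : StronglyMeasurable[ℱ] fun ω => c ω ^ 2 := by
      rw [show (fun ω => c ω ^ 2) = fun ω => c ω * c ω from funext fun ω => pow_two (c ω)]
      exact hcF.mul hcF
    have hYsm : AEStronglyMeasurable Y P := by
      have h1 : AEStronglyMeasurable (A.indicator X) P := hXA.1
      have h2 : StronglyMeasurable
          (fun ω' => c ω' * Aᶜ.indicator (fun _ => (1 : ℝ)) ω') :=
        (hcF.mono hℱ).mul (stronglyMeasurable_const.indicator hA.compl)
      exact h1.add h2.aestronglyMeasurable
    have hYmem : MemLp Y 2 P := (memLp_two_iff_integrable_sq hYsm).mpr hY2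
    have intY : Integrable Y P := hYmem.integrable one_le_two
    have intCind : Integrable (fun ω => c ω * Aᶜ.indicator (fun _ => (1 : ℝ)) ω) P := by
      refine (intY.sub intXA).congr (Filter.Eventually.of_forall fun ω => ?_)
      simp only [Pi.sub_apply, hY_def, hc_def]
      ring
    have intC2ind : Integrable (fun ω => c ω ^ 2 * Aᶜ.indicator (fun _ => (1 : ℝ)) ω) P := by
      refine (hY2.sub intXA2).congr (Filter.Eventually.of_forall fun ω => ?_)
      simp only [Pi.sub_apply, hY_def, hc_def]
      by_cases h : ω ∈ A <;>
        simp [Set.indicator_of_mem, Set.indicator_of_notMem, h]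
    have EY : ∀ᵐ ω ∂P, (P[Y | ℱ]) ω = m ω + c ω * q ω := by
      have h1 : P[Y | ℱ] =ᵐ[P] (P[A.indicator X | ℱ])
          + P[fun ω => c ω * Aᶜ.indicator (fun _ => (1 : ℝ)) ω | ℱ] :=
        condExp_add intXA intCind _
      have h2 : P[fun ω => c ω * Aᶜ.indicator (fun _ => (1 : ℝ)) ω | ℱ]
          =ᵐ[P] fun ω => c ω * q ω :=
        condExp_mul_of_stronglyMeasurable_left hcF intCind int1Ac
      filter_upwards [h1, h2] with ω e1 e2
      rw [e1, Pi.add_apply, e2]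
    have EY2 : ∀ᵐ ω ∂P, (P[fun ω' => Y ω' ^ 2 | ℱ]) ω = s ω + c ω ^ 2 * q ω := by
      have ee : (fun ω' => Y ω' ^ 2)
          = fun ω' => (A.indicator X ω') ^ 2 + c ω' ^ 2 * Aᶜ.indicator (fun _ => (1 : ℝ)) ω' := by
        funext ω
        simp only [hY_def, hc_def]
        by_cases h : ω ∈ A <;>
          simp [Set.indicator_of_mem, Set.indicator_of_notMem, h]
      have h1 : P[fun ω' => Y ω' ^ 2 | ℱ] =ᵐ[P] (P[fun ω' => (A.indicator X ω') ^ 2 | ℱ])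
          + P[fun ω => c ω ^ 2 * Aᶜ.indicator (fun _ => (1 : ℝ)) ω | ℱ] := by
        rw [ee]
        exact condExp_add intXA2 intC2ind _
      have h2 : P[fun ω => c ω ^ 2 * Aᶜ.indicator (fun _ => (1 : ℝ)) ω | ℱ]
          =ᵐ[P] fun ω => c ω ^ 2 * q ω :=
        condExp_mul_of_stronglyMeasurable_left hc2F intC2ind int1Ac
      filter_upwards [h1, h2] with ω e1 e2
      rw [e1, Pi.add_apply, e2]
    filter_upwards [EY, EY2, CS2, hsum_p, hsum_m, hsum_s, hp0, hq0, hs'0, hv1, hv2]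
      with ω hEY hEY2 hcs2 hsp hsm hss hp0' hq0' hs'0' hv1' hv2'
    simp only [condVar]
    rw [hEY2, hEY, ← hss, ← hsm]
    exact alg (s ω) (s' ω) (m ω) (m' ω) (p ω) (q ω) (c ω) hcs2 hsp hp0' hq0' hs'0'
      (by rw [hc_def]) hv1' hv2'
  · -- Y² not integrable : condVar of Y is ≤ 0
    have hzero : P[fun ω' => Y ω' ^ 2 | ℱ] = 0 := condExp_of_not_integrable hY2
    filter_upwards [CS3] with ω h
    simp only [condVar, hzero, Pi.zero_apply]
    nlinarith [sq_nonneg ((P[Y | ℱ]) ω)]
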